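/- For every integer ℓ ≥ 1 and every x ∈ A_ℓ, the derivative of the jump transformation satisfies |G'(x)| ≥ ρ, where ρ > 1 is the constant from hypothesis (H5). -/

import Mathlib

open Set Filter Topology Asymptotics MeasureTheory

noncomputable section

/-- The first passage time of `x` to the interval `(a,1)` under iteration of `T`
(`τ(x) = min {n ≥ 0 : Tⁿ x ∈ (a,1)}`). -/
def tau (T : ℝ → ℝ) (a : ℝ) (x : ℝ) : ℕ := sInf {n : ℕ | T^[n] x ∈ Set.Ioo a 1}

/-- The jump transformation `G(x) = T^{1+τ(x)}(x)` of `T` on `(a,1)`. -/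
def Gmap (T : ℝ → ℝ) (a : ℝ) (x : ℝ) : ℝ := T^[1 + tau T a x] x

/-- The sequence `a₀ = 1`, `a₁ = a`, `a_ℓ = ψ₀(a_{ℓ-1})`. -/
def aseq (ψ₀ : ℝ → ℝ) (a : ℝ) : ℕ → ℝ
  | 0 => 1
  | 1 => a
  | n + 2 => ψ₀ (aseq ψ₀ a (n + 1))

/-- The level sets `A_ℓ = (a_ℓ, a_{ℓ-1})` of the first passage function. -/
def Aset (ψ₀ : ℝ → ℝ) (a : ℝ) (ℓ : ℕ) : Set ℝ := Set.Ioo (aseq ψ₀ a ℓ) (aseq ψ₀ a (ℓ - 1))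

/-- The inverse branches `φ_ℓ = ψ₀^{ℓ-1} ∘ ψ₁` of the jump transformation. -/
def phib (ψ₀ ψ₁ : ℝ → ℝ) (ℓ : ℕ) : ℝ → ℝ := ψ₀^[ℓ - 1] ∘ ψ₁

/-- The induced potential `w(x) = ∑_{j=0}^{τ(x)} v(Tʲ x)`. -/
def indw (T : ℝ → ℝ) (a : ℝ) (v : ℝ → ℝ) (x : ℝ) : ℝ :=
  ∑ j ∈ Finset.range (tau T a x + 1), v (T^[j] x)

/-- The `C^h` norm `‖f‖_h = max_{0 ≤ j ≤ h} sup_{[0,1]} |f^{(j)}|` of a function on `[0,1]`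
(computed via the open interval `(0,1)`). -/
noncomputable def nrm {E : Type*} [NormedAddCommGroup E] [NormedSpace ℝ E]
    (h : ℕ) (f : ℝ → E) : ℝ :=
  (Finset.range (h + 1)).sup' Finset.nonempty_range_add_one fun j =>
    sSup ((fun x => ‖iteratedDerivWithin j f (Set.Ioo (0 : ℝ) 1) x‖) '' Set.Ioo (0 : ℝ) 1)

/-- Hypotheses (H1)–(H5) on the parabolic map `T`. -/
structure Hyp (T : ℝ → ℝ) (a : ℝ) (ψ₀ ψ₁ : ℝ → ℝ) (r : ℕ∞) (c α ε ρ : ℝ) : Prop where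
  ha : a ∈ Set.Ioo (0 : ℝ) 1
  hmaps : Set.MapsTo T (Set.Icc 0 1) (Set.Icc 0 1)
  mono0 : StrictMonoOn T (Set.Ioo 0 a)
  mono1 : StrictMonoOn T (Set.Ioo a 1) ∨ StrictAntiOn T (Set.Ioo a 1)
  full0 : closure (T '' Set.Ioo 0 a) = Set.Icc 0 1
  full1 : closure (T '' Set.Ioo a 1) = Set.Icc 0 1
  hr : 2 ≤ r
  smooth0 : ContDiffOn ℝ r T (Set.Ioc 0 a)
  smooth1 : ContDiffOn ℝ r T (Set.Icc a 1)
  inv0 : ∀ y ∈ Set.Ioo (0 : ℝ) 1, ψ₀ y ∈ Set.Ioo 0 a ∧ T (ψ₀ y) = y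
  inv0' : ∀ x ∈ Set.Ioo 0 a, ψ₀ (T x) = x
  inv1 : ∀ y ∈ Set.Ioo (0 : ℝ) 1, ψ₁ y ∈ Set.Ioo a 1 ∧ T (ψ₁ y) = y
  inv1' : ∀ x ∈ Set.Ioo a 1, ψ₁ (T x) = x
  hc : 0 < c
  hα : 0 < α
  fix0 : T 0 = 0
  dT0 : derivWithin T (Set.Icc 0 1) 0 = 1
  asymp : Filter.Tendsto (fun x => (deriv T x - 1) / (c * x ^ α)) (nhdsWithin 0 (Set.Ioi 0)) (nhds 1)
  hε : 0 < ε
  hρ : 1 < ρ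
  dmono : StrictMonoOn (deriv T) (Set.Ioo 0 ε)
  expand : ∀ x ∈ Set.Ico ε a ∪ Set.Ioo a 1, ρ ≤ |deriv T x|

/-- Hypothesis (H6) on the potential `v`: it is `C^k` on each branch interval and extends
to a `C^k` function on `[0,a]` and on `[a,1]`; `v 0` is declared to be the value at `0`
of the extension to `[0,a]`. -/
structure HypV (a : ℝ) (v : ℝ → ℝ) (k : ℕ∞) : Prop where
  ext0 : ∃ v0 : ℝ → ℝ, ContDiffOn ℝ k v0 (Set.Icc 0 a) ∧ Set.EqOn v v0 (Set.Ioo 0 a) ∧ v 0 = v0 0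
  ext1 : ∃ v1 : ℝ → ℝ, ContDiffOn ℝ k v1 (Set.Icc a 1) ∧ Set.EqOn v v1 (Set.Ioo a 1)

/-- Hypothesis (H7): `∑_n ‖e^{w∘φ_n}‖_h (1 + ‖φ_n‖_h^h) ≤ c_k` for all `h ≤ k`. -/
def H7 (T : ℝ → ℝ) (a : ℝ) (ψ₀ ψ₁ v : ℝ → ℝ) (k : ℕ) (ck : ℝ) : Prop :=
  ∀ h : ℕ, h ≤ k →
    Summable (fun n : ℕ =>
      nrm h (fun x => Real.exp (indw T a v (phib ψ₀ ψ₁ (n + 1) x))) *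
        (1 + nrm h (phib ψ₀ ψ₁ (n + 1)) ^ h)) ∧
    (∑' n : ℕ,
      nrm h (fun x => Real.exp (indw T a v (phib ψ₀ ψ₁ (n + 1) x))) *
        (1 + nrm h (phib ψ₀ ψ₁ (n + 1)) ^ h)) ≤ ck

/-- Composition `φ_β = φ_{β₁} ∘ ⋯ ∘ φ_{β_m}` along a list `β` of branch indices. -/
def phibList (ψ₀ ψ₁ : ℝ → ℝ) : List ℕ → ℝ → ℝ
  | [], x => x
  | n :: l, x => phib ψ₀ ψ₁ n (phibList ψ₀ ψ₁ l x)

/-- The weight `W_β(x) = exp (∑_{j=1}^m w(φ_{β_j  … β_m}(x)))`. -/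
def Wb (T : ℝ → ℝ) (a : ℝ) (ψ₀ ψ₁ v : ℝ → ℝ) : List ℕ → ℝ → ℝ
  | [], _ => 1
  | n :: l, x =>
      Real.exp (indw T a v (phib ψ₀ ψ₁ n (phibList ψ₀ ψ₁ l x))) * Wb T a ψ₀ ψ₁ v l x

/-- `Λ_m(z) = sup_{x ∈ (0,1)} ∑_{β ∈ ℕ_{≥1}^m} |z|^{|β|} W_β(x)`, as a function of `|z|`. -/
noncomputable def Lam (T : ℝ → ℝ) (a : ℝ) (ψ₀ ψ₁ v : ℝ → ℝ) (m : ℕ) (zn : ℝ) : ℝ :=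
  sSup ((fun x => ∑' β : Fin m → ℕ,
      zn ^ (m + ∑ i, β i) * Wb T a ψ₀ ψ₁ v (List.ofFn fun i => β i + 1) x) '' Set.Ioo (0 : ℝ) 1)


section Aux

variable {T : ℝ → ℝ} {a : ℝ} {ψ₀ ψ₁ : ℝ → ℝ} {r : ℕ∞} {c α ε ρ : ℝ}

lemma aseq_succ_eq (n : ℕ) : aseq ψ₀ a (n + 2) = ψ₀ (aseq ψ₀ a (n + 1)) := rfl

lemma aseq_mem_Ioo (hT : Hyp T a ψ₀ ψ₁ r c α ε ρ) (n : ℕ) :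
    aseq ψ₀ a (n + 2) ∈ Set.Ioo 0 a ∧ aseq ψ₀ a (n + 1) ∈ Set.Ioo (0 : ℝ) 1 := by
  induction n with
  | zero => exact ⟨(hT.inv0 a hT.ha).1, hT.ha⟩
  | succ n ih =>
    have h1 : aseq ψ₀ a (n + 2) ∈ Set.Ioo (0 : ℝ) 1 := ⟨ih.1.1, ih.1.2.trans hT.ha.2⟩
    exact ⟨(hT.inv0 _ h1).1, h1⟩

lemma aseq_le_a (hT : Hyp T a ψ₀ ψ₁ r c α ε ρ) (n : ℕ) : aseq ψ₀ a (n + 1) ≤ a := by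
  cases n with
  | zero => exact le_rfl
  | succ n => exact (aseq_mem_Ioo hT n).1.2.le

lemma step_lemma (hT : Hyp T a ψ₀ ψ₁ r c α ε ρ) (j : ℕ) {y : ℝ}
    (hy : y ∈ Set.Ioo (aseq ψ₀ a (j + 2)) (aseq ψ₀ a (j + 1))) :
    T y ∈ Set.Ioo (aseq ψ₀ a (j + 1)) (aseq ψ₀ a j) := by
  cases j with
  | zero =>
    have hψ := hT.inv0 a hT.ha
    have hy0 : y ∈ Set.Ioo 0 a := ⟨hψ.1.1.trans hy.1, hy.2⟩
    constructor
    · have h := hT.mono0 hψ.1 hy0 hy.1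
      rw [hψ.2] at h
      exact h
    · have hm : (y + a) / 2 ∈ Set.Ioo 0 a := ⟨by linarith [hy0.1, hT.ha.1], by linarith [hy0.2]⟩
      have h1 : T y < T ((y + a) / 2) := hT.mono0 hy0 hm (by linarith [hy0.2])
      have h2 : T ((y + a) / 2) ≤ 1 :=
        (hT.hmaps ⟨hm.1.le, hm.2.le.trans hT.ha.2.le⟩).2
      exact lt_of_lt_of_le h1 h2
  | succ j =>
    have h2 := (aseq_mem_Ioo hT j).2
    have h3 := (aseq_mem_Ioo hT j).1
    have h4 := (aseq_mem_Ioo hT (j + 1)).1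
    have hy0 : y ∈ Set.Ioo 0 a := ⟨h4.1.trans hy.1, hy.2.trans h3.2⟩
    constructor
    · have h := hT.mono0 h4 hy0 hy.1
      rw [show T (aseq ψ₀ a (j + 3)) = aseq ψ₀ a (j + 2) from
        (hT.inv0 _ ⟨h3.1, h3.2.trans hT.ha.2⟩).2] at h
      exact h
    · have h := hT.mono0 hy0 h3 hy.2
      rw [show T (aseq ψ₀ a (j + 2)) = aseq ψ₀ a (j + 1) from (hT.inv0 _ h2).2] at h
      exact h

lemma orbit_lemma (hT : Hyp T a ψ₀ ψ₁ r c α ε ρ) :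
    ∀ j : ℕ, ∀ y ∈ Set.Ioo (aseq ψ₀ a (j + 1)) (aseq ψ₀ a j),
      (∀ i < j, T^[i] y ∈ Set.Ioo 0 a) ∧ T^[j] y ∈ Set.Ioo a 1 := by
  intro j
  induction j with
  | zero => exact fun y hy => ⟨fun i hi => absurd hi (Nat.not_lt_zero i), hy⟩
  | succ j ih =>
    intro y hy
    have hy0 : y ∈ Set.Ioo 0 a :=
      ⟨(aseq_mem_Ioo hT j).1.1.trans hy.1, lt_of_lt_of_le hy.2 (aseq_le_a hT j)⟩
    obtain ⟨h1, h2⟩ := ih (T y) (step_lemma hT j hy)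
    refine ⟨fun i hi => ?_, by rw [Function.iterate_succ_apply]; exact h2⟩
    cases i with
    | zero => simpa using hy0
    | succ i =>
      rw [Function.iterate_succ_apply]
      exact h1 i (Nat.lt_of_succ_lt_succ hi)

lemma tau_eq (hT : Hyp T a ψ₀ ψ₁ r c α ε ρ) (m : ℕ) {x : ℝ}
    (hx : x ∈ Set.Ioo (aseq ψ₀ a (m + 1)) (aseq ψ₀ a m)) : tau T a x = m := by
  obtain ⟨h1, h2⟩ := orbit_lemma hT m x hx
  have hm : m ∈ {n : ℕ | T^[n] x ∈ Set.Ioo a 1} := h2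
  refine le_antisymm (Nat.sInf_le hm) ?_
  by_contra h
  push_neg at h
  have hmem := Nat.sInf_mem (⟨m, hm⟩ : Set.Nonempty {n : ℕ | T^[n] x ∈ Set.Ioo a 1})
  have h3 := h1 _ h
  exact absurd hmem.1 (not_lt.2 h3.2.le)

lemma T_diffAt (hT : Hyp T a ψ₀ ψ₁ r c α ε ρ) {y : ℝ}
    (hy : y ∈ Set.Ioo 0 a ∪ Set.Ioo a 1) : DifferentiableAt ℝ T y := by
  have hr1 : (1 : WithTop ℕ∞) ≤ (r : WithTop ℕ∞) := by
    exact_mod_cast le_trans (show (1 : ℕ∞) ≤ 2 by norm_num) hT.hr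
  rcases hy with hy | hy
  · have h1 : Set.Ioc 0 a ∈ 𝓝 y :=
      mem_nhds_iff.2 ⟨Set.Ioo 0 a, Set.Ioo_subset_Ioc_self, isOpen_Ioo, hy⟩
    exact (hT.smooth0.contDiffAt h1).differentiableAt (zero_lt_one.trans_le hr1).ne'
  · have h1 : Set.Icc a 1 ∈ 𝓝 y :=
      mem_nhds_iff.2 ⟨Set.Ioo a 1, Set.Ioo_subset_Icc_self, isOpen_Ioo, hy⟩
    exact (hT.smooth1.contDiffAt h1).differentiableAt (zero_lt_one.trans_le hr1).ne'

lemma one_le_abs_deriv (hT : Hyp T a ψ₀ ψ₁ r c α ε ρ) {y : ℝ}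
    (hy : y ∈ Set.Ioo 0 a) : 1 ≤ |deriv T y| := by
  rcases le_or_gt ε y with h | h
  · exact le_trans hT.hρ.le (hT.expand y (Or.inl ⟨h, hy.2⟩))
  · have h2 : ∀ᶠ z in 𝓝[>] (0 : ℝ), (1 / 2 : ℝ) < (deriv T z - 1) / (c * z ^ α) :=
      hT.asymp.eventually (eventually_gt_nhds (by norm_num))
    obtain ⟨δ, hδ, hδ2⟩ := mem_nhdsGT_iff_exists_Ioo_subset.1 h2
    have hδ0 : (0 : ℝ) < δ := hδ
    set z := min δ y / 2 with hzdef
    have hmin : 0 < min δ y := lt_min hδ0 hy.1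
    have hz0 : 0 < z := by positivity
    have hzδ : z < δ := by
      have := min_le_left δ y; simp only [hzdef]; linarith
    have hzy : z < y := by
      have := min_le_right δ y; simp only [hzdef]; linarith
    have hzlt : (1 / 2 : ℝ) < (deriv T z - 1) / (c * z ^ α) := hδ2 ⟨hz0, hzδ⟩
    have hpow : 0 < c * z ^ α := mul_pos hT.hc (Real.rpow_pos_of_pos hz0 α)
    have h1z : 1 < deriv T z := by
      have hh := (lt_div_iff₀ hpow).1 hzlt
      nlinarith
    have hmono : deriv T z < deriv T y :=
      hT.dmono ⟨hz0, hzy.trans h⟩ ⟨hy.1, h⟩ hzy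
    exact le_trans (le_of_lt (h1z.trans hmono)) (le_abs_self _)

lemma iter_hasDerivAt (T : ℝ → ℝ) (x : ℝ) :
    ∀ n : ℕ, (∀ j < n, DifferentiableAt ℝ T (T^[j] x)) →
      HasDerivAt (T^[n]) (∏ j ∈ Finset.range n, deriv T (T^[j] x)) x := by
  intro n
  induction n with
  | zero => intro _; simpa using hasDerivAt_id x
  | succ n ih =>
    intro h
    have h1 := ih fun j hj => h j (hj.trans (Nat.lt_succ_self n))
    have h2 : HasDerivAt T (deriv T (T^[n] x)) (T^[n] x) :=
      (h n (Nat.lt_succ_self n)).hasDerivAt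
    rw [Function.iterate_succ', Finset.prod_range_succ, mul_comm]
    exact h2.comp x h1

end Aux

/-- Lemma 2.2 (v): for every `ℓ ≥ 1` and every `x ∈ A_ℓ`, the derivative of the jump
transformation satisfies `|G'(x)| ≥ ρ`, where `ρ > 1` is the expansion constant of (H5). -/
theorem statement2 (T : ℝ → ℝ) (a : ℝ) (ψ₀ ψ₁ : ℝ → ℝ) (r : ℕ∞) (c α ε ρ : ℝ)
    (hT : Hyp T a ψ₀ ψ₁ r c α ε ρ) (ℓ : ℕ) (hℓ : 1 ≤ ℓ) (x : ℝ) (hx : x ∈ Aset ψ₀ a ℓ) :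
    ρ ≤ |deriv (Gmap T a) x| := by
  obtain ⟨m, rfl⟩ : ∃ m, ℓ = m + 1 := ⟨ℓ - 1, (Nat.succ_pred_eq_of_pos hℓ).symm⟩
  have hx' : x ∈ Set.Ioo (aseq ψ₀ a (m + 1)) (aseq ψ₀ a m) := by
    simpa [Aset] using hx
  obtain ⟨horb, hlast⟩ := orbit_lemma hT m x hx'
  have hev : Gmap T a =ᶠ[𝓝 x] (T^[m + 1]) := by
    filter_upwards [isOpen_Ioo.mem_nhds hx'] with y hy
    have hτ : tau T a y = m := tau_eq hT m hy
    simp only [Gmap, hτ, Nat.add_comm]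
  have hdiff : ∀ j < m + 1, DifferentiableAt ℝ T (T^[j] x) := by
    intro j hj
    rcases Nat.lt_succ_iff_lt_or_eq.1 hj with hj | rfl
    · exact T_diffAt hT (Or.inl (horb j hj))
    · exact T_diffAt hT (Or.inr hlast)
  have hD := iter_hasDerivAt T x (m + 1) hdiff
  rw [hev.deriv_eq, hD.deriv, Finset.abs_prod, Finset.prod_range_succ]
  have h1 : 1 ≤ ∏ j ∈ Finset.range m, |deriv T (T^[j] x)| := by
    have := Finset.prod_le_prod (s := Finset.range m) (f := fun _ => (1 : ℝ))
      (g := fun j => |deriv T (T^[j] x)|) (fun _ _ => zero_le_one)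
      (fun j hj => one_le_abs_deriv hT (horb j (Finset.mem_range.1 hj)))
    simpa using this
  have h2 : ρ ≤ |deriv T (T^[m] x)| := hT.expand _ (Or.inr hlast)
  calc ρ = 1 * ρ := (one_mul ρ).symm
    _ ≤ _ := mul_le_mul h1 h2 (le_of_lt (lt_trans one_pos hT.hρ)) (le_trans zero_le_one h1)

end
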